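/- For every real number p with 1 < p ≤ 2 there exists a constant c_p > 0 such that for every real a > 0 and every real x one has |a + x|^p ≤ a^p + p·a^{p−1}·x + c_p·|x|^p. -/

import Mathlib

open Real MeasureTheory intervalIntegral Filter Set
open scoped NNReal

/-- signed power function `t ↦ sign t * |t|^q`. -/
noncomputable def sgnPow (q t : ℝ) : ℝ := Real.sign t * |t| ^ q

lemma sgnPow_of_nonneg {q : ℝ} (hq : 0 < q) {t : ℝ} (ht : 0 ≤ t) :
    sgnPow q t = t ^ q := by
  rcases eq_or_lt_of_le ht with h | h
  · simp [sgnPow, ← h, Real.zero_rpow hq.ne', Real.sign_zero]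
  · simp [sgnPow, Real.sign_of_pos h, abs_of_pos h]

lemma sgnPow_neg (q t : ℝ) : sgnPow q (-t) = - sgnPow q t := by
  simp [sgnPow, Real.sign_neg]

lemma sgnPow_of_nonpos {q : ℝ} (hq : 0 < q) {t : ℝ} (ht : t ≤ 0) :
    sgnPow q t = -((-t) ^ q) := by
  have := sgnPow_of_nonneg hq (t := -t) (by linarith)
  rw [sgnPow_neg] at this
  linarith

lemma sgnPow_monotone {q : ℝ} (hq : 0 < q) : Monotone (sgnPow q) := by
  intro u v huv
  rcases le_total 0 u with hu | hu
  · rw [sgnPow_of_nonneg hq hu, sgnPow_of_nonneg hq (hu.trans huv)]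
    exact Real.rpow_le_rpow hu huv hq.le
  · rcases le_total 0 v with hv | hv
    · rw [sgnPow_of_nonpos hq hu, sgnPow_of_nonneg hq hv]
      have h1 : (0:ℝ) ≤ (-u) ^ q := Real.rpow_nonneg (by linarith) q
      have h2 : (0:ℝ) ≤ v ^ q := Real.rpow_nonneg hv q
      linarith
    · rw [sgnPow_of_nonpos hq hu, sgnPow_of_nonpos hq hv]
      have := Real.rpow_le_rpow (by linarith : (0:ℝ) ≤ -v) (by linarith : -v ≤ -u) hq.le
      linarith

/-- subadditivity of `x ↦ x^q` on nonnegative reals for `q ≤ 1`. -/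
lemma rpow_add_le_add_rpow_real {q : ℝ} (hq0 : 0 ≤ q) (hq1 : q ≤ 1)
    {x y : ℝ} (hx : 0 ≤ x) (hy : 0 ≤ y) : (x + y) ^ q ≤ x ^ q + y ^ q := by
  have h := NNReal.rpow_add_le_add_rpow x.toNNReal y.toNNReal hq0 hq1
  have hxy : ((x.toNNReal + y.toNNReal : ℝ≥0) : ℝ) = x + y := by
    simp [Real.coe_toNNReal _ hx, Real.coe_toNNReal _ hy]
  calc (x + y) ^ q = ((x.toNNReal + y.toNNReal : ℝ≥0) : ℝ) ^ q := by rw [hxy]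
    _ = (((x.toNNReal + y.toNNReal) ^ q : ℝ≥0) : ℝ) := by
        rw [← NNReal.coe_rpow]
    _ ≤ ((x.toNNReal ^ q + y.toNNReal ^ q : ℝ≥0) : ℝ) := by exact_mod_cast h
    _ = x ^ q + y ^ q := by
        rw [NNReal.coe_add, NNReal.coe_rpow, NNReal.coe_rpow,
          Real.coe_toNNReal _ hx, Real.coe_toNNReal _ hy]

/-- Hölder-type bound for the signed power. -/
lemma abs_sgnPow_sub_le {q : ℝ} (hq0 : 0 < q) (hq1 : q ≤ 1) (u v : ℝ) :
    |sgnPow q u - sgnPow q v| ≤ 2 * |u - v| ^ q := by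
  -- wlog v ≤ u
  wlog huv : v ≤ u generalizing u v
  · have := this v u (by linarith)
    rwa [abs_sub_comm, abs_sub_comm v u] at this
  rw [abs_of_nonneg (by linarith [sgnPow_monotone hq0 huv]),
      abs_of_nonneg (by linarith : (0:ℝ) ≤ u - v)]
  rcases le_total 0 v with hv | hv
  · rw [sgnPow_of_nonneg hq0 hv, sgnPow_of_nonneg hq0 (hv.trans huv)]
    have hsub : u ^ q ≤ (u - v) ^ q + v ^ q := by
      have := rpow_add_le_add_rpow_real hq0.le hq1 (x := u - v) (y := v)
        (by linarith) hv
      simpa [sub_add_cancel] using this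
    have h0 : (0:ℝ) ≤ (u - v) ^ q := Real.rpow_nonneg (by linarith) q
    linarith
  · rcases le_total 0 u with hu | hu
    · rw [sgnPow_of_nonneg hq0 hu, sgnPow_of_nonpos hq0 hv]
      have h1 : u ^ q ≤ (u - v) ^ q :=
        Real.rpow_le_rpow hu (by linarith) hq0.le
      have h2 : (-v) ^ q ≤ (u - v) ^ q :=
        Real.rpow_le_rpow (by linarith) (by linarith) hq0.le
      linarith
    · rw [sgnPow_of_nonpos hq0 hu, sgnPow_of_nonpos hq0 hv]
      have hsub : (-v) ^ q ≤ (u - v) ^ q + (-u) ^ q := by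
        have := rpow_add_le_add_rpow_real hq0.le hq1 (x := u - v) (y := -u)
          (by linarith) (by linarith)
        have e : u - v + -u = -v := by ring
        rwa [e] at this
      have h0 : (0:ℝ) ≤ (u - v) ^ q := Real.rpow_nonneg (by linarith) q
      linarith

/-- derivative of `s ↦ |s|^p` for `p > 1`. -/
lemma hasDerivAt_abs_rpow_sgnPow {p : ℝ} (hp : 1 < p) (t : ℝ) :
    HasDerivAt (fun s : ℝ => |s| ^ p) (p * sgnPow (p - 1) t) t := by
  have h := hasDerivAt_abs_rpow t hp
  convert h using 1
  rcases eq_or_ne t 0 with rfl | ht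
  · simp [sgnPow, Real.sign_zero]
  · have habs : (0:ℝ) < |t| := abs_pos.mpr ht
    have : |t| ^ (p - 2) * t = sgnPow (p - 1) t := by
      rcases ht.lt_or_gt with h1 | h1
      · rw [sgnPow_of_nonpos (by linarith) h1.le, abs_of_neg h1]
        rw [show p - 1 = (p - 2) + 1 by ring, Real.rpow_add (by linarith) , Real.rpow_one]
        ring
      · rw [sgnPow_of_nonneg (by linarith) h1.le, abs_of_pos h1]
        rw [show p - 1 = (p - 2) + 1 by ring, Real.rpow_add h1, Real.rpow_one]
    rw [mul_assoc, this]

/-- For every real `p` with `1 < p ≤ 2` there exists `c_p > 0` such that for every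
`a > 0` and every real `x`, `|a + x|^p ≤ a^p + p·a^(p-1)·x + c_p·|x|^p`. -/
theorem rpow_add_le_of_one_lt (p : ℝ) (hp1 : 1 < p) (hp2 : p ≤ 2) :
    ∃ c : ℝ, 0 < c ∧ ∀ a x : ℝ, 0 < a →
      |a + x| ^ p ≤ a ^ p + p * a ^ (p - 1) * x + c * |x| ^ p := by
  have hp0 : 0 < p := by linarith
  have hq : 0 < p - 1 := by linarith
  have hq1 : p - 1 ≤ 1 := by linarith
  refine ⟨2 * p, by linarith, fun a x ha => ?_⟩
  set q := p - 1 with hqdef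
  have hmono : Monotone (fun s : ℝ => p * sgnPow q (a + s)) := fun u v huv =>
    mul_le_mul_of_nonneg_left (sgnPow_monotone hq (by linarith)) hp0.le
  have hint : IntervalIntegrable (fun s : ℝ => p * sgnPow q (a + s)) volume 0 x :=
    hmono.intervalIntegrable
  have hftc : ∫ s in (0:ℝ)..x, p * sgnPow q (a + s) = |a + x| ^ p - a ^ p := by
    have h := intervalIntegral.integral_eq_sub_of_hasDerivAt
      (f := fun s => |a + s| ^ p) (f' := fun s => p * sgnPow q (a + s)) (a := 0) (b := x)
      (fun t _ => by
        have h1 := hasDerivAt_abs_rpow_sgnPow hp1 (a + t)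
        have h2 : HasDerivAt (fun s : ℝ => a + s) 1 t := (hasDerivAt_id t).const_add a
        have h3 := h1.comp t h2
        simpa [Function.comp_def, hqdef] using h3) hint
    simpa [abs_of_pos ha] using h
  have hintc : IntervalIntegrable (fun _ : ℝ => p * sgnPow q a) volume 0 x :=
    intervalIntegrable_const
  have hconst : ∫ _ in (0:ℝ)..x, p * sgnPow q a = p * a ^ q * x := by
    rw [intervalIntegral.integral_const, sgnPow_of_nonneg hq ha.le]
    simp [smul_eq_mul]; ring
  have key : |a + x| ^ p - a ^ p - p * a ^ q * x
      = ∫ s in (0:ℝ)..x, (p * sgnPow q (a + s) - p * sgnPow q a) := by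
    rw [intervalIntegral.integral_sub hint hintc, hftc, hconst]
  have hbnd : ‖∫ s in (0:ℝ)..x, (p * sgnPow q (a + s) - p * sgnPow q a)‖
      ≤ (2 * p * |x| ^ q) * |x - 0| := by
    refine intervalIntegral.norm_integral_le_of_norm_le_const (fun s hs => ?_)
    have hsx : |s| ≤ |x| := by
      rcases Set.mem_uIoc.mp hs with ⟨h1, h2⟩ | ⟨h1, h2⟩
      · rw [abs_of_pos h1, abs_of_nonneg (h1.le.trans h2)]; exact h2
      · have hx0 : x < 0 := lt_of_lt_of_le h1 h2
        rw [abs_of_nonpos h2, abs_of_neg hx0]; linarith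
    have h1 : ‖p * sgnPow q (a + s) - p * sgnPow q a‖
        = p * |sgnPow q (a + s) - sgnPow q a| := by
      rw [← mul_sub, Real.norm_eq_abs, abs_mul, abs_of_pos hp0]
    rw [h1]
    have h2 := abs_sgnPow_sub_le hq hq1 (a + s) a
    have h3 : |a + s - a| = |s| := by rw [add_sub_cancel_left]
    rw [h3] at h2
    have h4 : |s| ^ q ≤ |x| ^ q := Real.rpow_le_rpow (abs_nonneg s) hsx hq.le
    calc p * |sgnPow q (a + s) - sgnPow q a| ≤ p * (2 * |s| ^ q) :=
          mul_le_mul_of_nonneg_left h2 hp0.le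
      _ ≤ p * (2 * |x| ^ q) := by nlinarith
      _ = 2 * p * |x| ^ q := by ring
  have habs : |x| ^ q * |x| = |x| ^ p := by
    rcases eq_or_ne x 0 with rfl | hx
    · simp [Real.zero_rpow hq.ne', Real.zero_rpow hp0.ne']
    · rw [show p = q + 1 by rw [hqdef]; ring, Real.rpow_add (abs_pos.mpr hx), Real.rpow_one]
  have hfin : |a + x| ^ p - a ^ p - p * a ^ q * x ≤ 2 * p * |x| ^ p := by
    rw [key]
    calc (∫ s in (0:ℝ)..x, (p * sgnPow q (a + s) - p * sgnPow q a))
        ≤ ‖∫ s in (0:ℝ)..x, (p * sgnPow q (a + s) - p * sgnPow q a)‖ := le_abs_self _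
      _ ≤ (2 * p * |x| ^ q) * |x - 0| := hbnd
      _ = 2 * p * (|x| ^ q * |x|) := by rw [sub_zero]; ring
      _ = 2 * p * |x| ^ p := by rw [habs]
  linarith
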